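/- Let A = C⟨X₁,…,Xₙ,Y₁,…,Yₘ⟩/Z be the algebra where Z is the ideal generated by all commutators [Xᵢ,Yⱼ]. Equip A⊗A with multiplication (Z₁⊗Z₂)·(W₁⊗W₂)=Z₁W₁⊗Z₂W₂, and let Θ_{(1,2)}(Z₁⊗Z₂)=Z₂⊗Z₁. Then for every P ∈ A: ∑_{i=1}^{n} [∂_{ℓ,Xᵢ}(P)(Xᵢ⊗1) − (1⊗Xᵢ)∂_{ℓ,Xᵢ}(P)] − Θ_{(1,2)}(∑_{j=1}^{m} [∂_{r,Yⱼ}(P)(Yⱼ⊗1) − (1⊗Yⱼ)∂_{r,Yⱼ}(P)]) = P⊗1 − 1⊗P. -/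

import Mathlib

open Finset TensorProduct

set_option synthInstance.maxHeartbeats 400000
set_option maxHeartbeats 800000

/-- The algebra `ℂ⟨X₁,…,Xₙ,Y₁,…,Yₘ⟩ / ([Xᵢ,Yⱼ] = 0)`, modelled as the tensor
product of the free algebra on the left variables with the free algebra on the
right variables.  The `Xᵢ` are `ι i ⊗ 1` and the `Yⱼ` are `1 ⊗ ι j`; the
multiplication on `A ⊗ A` is `(Z₁⊗Z₂)·(W₁⊗W₂) = Z₁W₁ ⊗ Z₂W₂`. -/
abbrev BiPartiteAlg (n m : ℕ) : Type :=
  FreeAlgebra ℂ (Fin n) ⊗[ℂ] FreeAlgebra ℂ (Fin m)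

/-- The product of the word `w` of generators in the free algebra. -/
noncomputable def wordProd {k : ℕ} (w : List (Fin k)) : FreeAlgebra ℂ (Fin k) :=
  (w.map (FreeAlgebra.ι ℂ)).prod

/-- The left variable `Xᵢ`. -/
noncomputable def Xel {n m : ℕ} (i : Fin n) : BiPartiteAlg n m :=
  FreeAlgebra.ι ℂ i ⊗ₜ[ℂ] (1 : FreeAlgebra ℂ (Fin m))

/-- The right variable `Yⱼ`. -/
noncomputable def Yel {n m : ℕ} (j : Fin m) : BiPartiteAlg n m :=
  (1 : FreeAlgebra ℂ (Fin n)) ⊗ₜ[ℂ] FreeAlgebra.ι ℂ j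

/-- Proposition `zero-diff-quot-equals-scalar`, main identity: for the left and
right bi-free difference quotients `∂_{ℓ,Xᵢ}`, `∂_{r,Yⱼ}` (characterized by their
values on monomials `X_{i₁}⋯X_{i_p} Y_{j₁}⋯Y_{j_q}`), and for every `P`,
`∑ᵢ [∂_{ℓ,Xᵢ}(P)(Xᵢ⊗1) − (1⊗Xᵢ)∂_{ℓ,Xᵢ}(P)]
  − Θ_{(1,2)}(∑ⱼ [∂_{r,Yⱼ}(P)(Yⱼ⊗1) − (1⊗Yⱼ)∂_{r,Yⱼ}(P)]) = P⊗1 − 1⊗P`. -/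
lemma wordProd_nil {k : ℕ} : wordProd ([] : List (Fin k)) = 1 := rfl

lemma wordProd_cons {k : ℕ} (i : Fin k) (w : List (Fin k)) :
    wordProd (i :: w) = FreeAlgebra.ι ℂ i * wordProd w := by simp [wordProd]

lemma wordProd_append {k : ℕ} (u v : List (Fin k)) :
    wordProd (u ++ v) = wordProd u * wordProd v := by simp [wordProd]

lemma span_words (k : ℕ) :
    Submodule.span ℂ (Set.range (wordProd (k := k))) = ⊤ := by
  rw [eq_top_iff]
  rintro a -
  induction a with
  | grade0 r =>
      rw [Algebra.algebraMap_eq_smul_one]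
      exact Submodule.smul_mem _ _ (Submodule.subset_span ⟨[], rfl⟩)
  | grade1 i => exact Submodule.subset_span ⟨[i], by simp [wordProd]⟩
  | mul a b ha hb =>
      refine Submodule.span_induction₂ (p := fun x y _ _ =>
        x * y ∈ Submodule.span ℂ (Set.range (wordProd (k := k)))) ?_ ?_ ?_ ?_ ?_ ?_ ?_ ha hb
      · rintro _ _ ⟨u, rfl⟩ ⟨v, rfl⟩
        exact Submodule.subset_span ⟨u ++ v, wordProd_append u v⟩
      · intro y _; simp
      · intro x _; simp
      · intro x y z _ _ _ h1 h2; rw [add_mul]; exact add_mem h1 h2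
      · intro x y z _ _ _ h1 h2; rw [mul_add]; exact add_mem h1 h2
      · intro r x y _ _ h; rw [smul_mul_assoc]; exact Submodule.smul_mem _ _ h
      · intro r x y _ _ h; rw [mul_smul_comm]; exact Submodule.smul_mem _ _ h
  | add a b ha hb => exact add_mem ha hb

lemma span_pairs (n m : ℕ) :
    Submodule.span ℂ {p : BiPartiteAlg n m |
      ∃ wx wy, p = wordProd wx ⊗ₜ[ℂ] wordProd wy} = ⊤ := by
  rw [eq_top_iff]
  rintro x -
  induction x using TensorProduct.induction_on with
  | zero => exact zero_mem _
  | add a b ha hb => exact add_mem ha hb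
  | tmul a b =>
      have ha : a ∈ Submodule.span ℂ (Set.range (wordProd (k := n))) := by
        rw [span_words]; trivial
      have hb : b ∈ Submodule.span ℂ (Set.range (wordProd (k := m))) := by
        rw [span_words]; trivial
      refine Submodule.span_induction
        (p := fun x _ => x ⊗ₜ[ℂ] b ∈ Submodule.span ℂ {p : BiPartiteAlg n m |
          ∃ wx wy, p = wordProd wx ⊗ₜ[ℂ] wordProd wy}) ?_ ?_ ?_ ?_ ha
      · rintro _ ⟨u, rfl⟩
        refine Submodule.span_induction
          (p := fun y _ => wordProd u ⊗ₜ[ℂ] y ∈ Submodule.span ℂ {p : BiPartiteAlg n m |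
            ∃ wx wy, p = wordProd wx ⊗ₜ[ℂ] wordProd wy}) ?_ ?_ ?_ ?_ hb
        · rintro _ ⟨v, rfl⟩
          exact Submodule.subset_span ⟨u, v, rfl⟩
        · simp
        · intro x y _ _ h1 h2; rw [tmul_add]; exact add_mem h1 h2
        · intro r x _ h; rw [tmul_smul]; exact Submodule.smul_mem _ _ h
      · simp
      · intro x y _ _ h1 h2; rw [add_tmul]; exact add_mem h1 h2
      · intro r x _ h; rw [← smul_tmul']; exact Submodule.smul_mem _ _ h

lemma left_sum {n m : ℕ}
    (Dl : Fin n → (BiPartiteAlg n m →ₗ[ℂ] BiPartiteAlg n m ⊗[ℂ] BiPartiteAlg n m))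
    (hDl : ∀ (i : Fin n) (wx : List (Fin n)) (wy : List (Fin m)),
      Dl i (wordProd wx ⊗ₜ[ℂ] wordProd wy) =
        ∑ k ∈ range wx.length,
          if wx[k]? = some i then
            ((wordProd (wx.take k) ⊗ₜ[ℂ] wordProd wy) ⊗ₜ[ℂ]
              (wordProd (wx.drop (k+1)) ⊗ₜ[ℂ] (1 : FreeAlgebra ℂ (Fin m))) :
                BiPartiteAlg n m ⊗[ℂ] BiPartiteAlg n m)
          else 0)
    (wx : List (Fin n)) (wy : List (Fin m)) :
    (∑ i, (Dl i (wordProd wx ⊗ₜ[ℂ] wordProd wy) * (Xel i ⊗ₜ[ℂ] (1 : BiPartiteAlg n m))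
        - ((1 : BiPartiteAlg n m) ⊗ₜ[ℂ] Xel i) * Dl i (wordProd wx ⊗ₜ[ℂ] wordProd wy)))
    = (wordProd wx ⊗ₜ[ℂ] wordProd wy) ⊗ₜ[ℂ] (1 : BiPartiteAlg n m)
      - (((1 : FreeAlgebra ℂ (Fin n)) ⊗ₜ[ℂ] wordProd wy : BiPartiteAlg n m) ⊗ₜ[ℂ]
          ((wordProd wx ⊗ₜ[ℂ] (1 : FreeAlgebra ℂ (Fin m))) : BiPartiteAlg n m)) := by
  have tele := Finset.sum_range_sub (G := BiPartiteAlg n m ⊗[ℂ] BiPartiteAlg n m) (f := fun k =>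
    ((wordProd (wx.take k) ⊗ₜ[ℂ] wordProd wy : BiPartiteAlg n m) ⊗ₜ[ℂ]
      ((wordProd (wx.drop k) ⊗ₜ[ℂ] (1 : FreeAlgebra ℂ (Fin m))) : BiPartiteAlg n m))) wx.length
  simp only [List.take_length, List.drop_length, List.take_zero, List.drop_zero,
    wordProd_nil] at tele
  rw [show ((wordProd wx ⊗ₜ[ℂ] wordProd wy : BiPartiteAlg n m) ⊗ₜ[ℂ] (1 : BiPartiteAlg n m))
      = ((wordProd wx ⊗ₜ[ℂ] wordProd wy : BiPartiteAlg n m) ⊗ₜ[ℂ]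
        (((1 : FreeAlgebra ℂ (Fin n)) ⊗ₜ[ℂ] (1 : FreeAlgebra ℂ (Fin m))) : BiPartiteAlg n m))
      from rfl, ← tele]
  simp only [hDl, Finset.sum_mul (R := BiPartiteAlg n m ⊗[ℂ] BiPartiteAlg n m), Finset.mul_sum (R := BiPartiteAlg n m ⊗[ℂ] BiPartiteAlg n m), ite_mul, mul_ite, zero_mul (M₀ := BiPartiteAlg n m ⊗[ℂ] BiPartiteAlg n m), mul_zero (M₀ := BiPartiteAlg n m ⊗[ℂ] BiPartiteAlg n m)]
  simp only [← Finset.sum_sub_distrib (G := BiPartiteAlg n m ⊗[ℂ] BiPartiteAlg n m)]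
  rw [Finset.sum_comm]
  refine Finset.sum_congr rfl fun k hk => ?_
  have hk' : k < wx.length := Finset.mem_range.mp hk
  have hg : wx[k]? = some wx[k] := List.getElem?_eq_getElem hk'
  rw [Finset.sum_sub_distrib]
  simp only [hg, Option.some.injEq, Finset.sum_ite_eq, Finset.mem_univ, if_true]
  have h1 : wordProd (wx.take (k+1)) = wordProd (wx.take k) * FreeAlgebra.ι ℂ wx[k] := by
    rw [← List.take_concat_get hk', List.concat_eq_append, wordProd_append,
      wordProd_cons, wordProd_nil, mul_one]
  have h2 : wordProd (wx.drop k) = FreeAlgebra.ι ℂ wx[k] * wordProd (wx.drop (k+1)) := by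
    rw [List.drop_eq_getElem_cons hk', wordProd_cons]
  rw [h1, h2]
  simp [Xel, Algebra.TensorProduct.one_def, Algebra.TensorProduct.tmul_mul_tmul]

lemma right_sum {n m : ℕ}
    (Dr : Fin m → (BiPartiteAlg n m →ₗ[ℂ] BiPartiteAlg n m ⊗[ℂ] BiPartiteAlg n m))
    (hDr : ∀ (j : Fin m) (wx : List (Fin n)) (wy : List (Fin m)),
      Dr j (wordProd wx ⊗ₜ[ℂ] wordProd wy) =
        ∑ k ∈ range wy.length,
          if wy[k]? = some j then
            ((wordProd wx ⊗ₜ[ℂ] wordProd (wy.take k)) ⊗ₜ[ℂ]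
              ((1 : FreeAlgebra ℂ (Fin n)) ⊗ₜ[ℂ] wordProd (wy.drop (k+1))) :
                BiPartiteAlg n m ⊗[ℂ] BiPartiteAlg n m)
          else 0)
    (wx : List (Fin n)) (wy : List (Fin m)) :
    (∑ j, (Dr j (wordProd wx ⊗ₜ[ℂ] wordProd wy) * (Yel j ⊗ₜ[ℂ] (1 : BiPartiteAlg n m))
        - ((1 : BiPartiteAlg n m) ⊗ₜ[ℂ] Yel j) * Dr j (wordProd wx ⊗ₜ[ℂ] wordProd wy)))
    = (wordProd wx ⊗ₜ[ℂ] wordProd wy) ⊗ₜ[ℂ] (1 : BiPartiteAlg n m)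
      - ((wordProd wx ⊗ₜ[ℂ] (1 : FreeAlgebra ℂ (Fin m)) : BiPartiteAlg n m) ⊗ₜ[ℂ]
          (((1 : FreeAlgebra ℂ (Fin n)) ⊗ₜ[ℂ] wordProd wy) : BiPartiteAlg n m)) := by
  have tele := Finset.sum_range_sub (G := BiPartiteAlg n m ⊗[ℂ] BiPartiteAlg n m) (f := fun k =>
    ((wordProd wx ⊗ₜ[ℂ] wordProd (wy.take k) : BiPartiteAlg n m) ⊗ₜ[ℂ]
      (((1 : FreeAlgebra ℂ (Fin n)) ⊗ₜ[ℂ] wordProd (wy.drop k)) : BiPartiteAlg n m))) wy.length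
  simp only [List.take_length, List.drop_length, List.take_zero, List.drop_zero,
    wordProd_nil] at tele
  rw [show ((wordProd wx ⊗ₜ[ℂ] wordProd wy : BiPartiteAlg n m) ⊗ₜ[ℂ] (1 : BiPartiteAlg n m))
      = ((wordProd wx ⊗ₜ[ℂ] wordProd wy : BiPartiteAlg n m) ⊗ₜ[ℂ]
        (((1 : FreeAlgebra ℂ (Fin n)) ⊗ₜ[ℂ] (1 : FreeAlgebra ℂ (Fin m))) : BiPartiteAlg n m))
      from rfl, ← tele]
  simp only [hDr, Finset.sum_mul (R := BiPartiteAlg n m ⊗[ℂ] BiPartiteAlg n m), Finset.mul_sum (R := BiPartiteAlg n m ⊗[ℂ] BiPartiteAlg n m), ite_mul, mul_ite, zero_mul (M₀ := BiPartiteAlg n m ⊗[ℂ] BiPartiteAlg n m), mul_zero (M₀ := BiPartiteAlg n m ⊗[ℂ] BiPartiteAlg n m)]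
  simp only [← Finset.sum_sub_distrib (G := BiPartiteAlg n m ⊗[ℂ] BiPartiteAlg n m)]
  rw [Finset.sum_comm]
  refine Finset.sum_congr rfl fun k hk => ?_
  have hk' : k < wy.length := Finset.mem_range.mp hk
  have hg : wy[k]? = some wy[k] := List.getElem?_eq_getElem hk'
  rw [Finset.sum_sub_distrib]
  simp only [hg, Option.some.injEq, Finset.sum_ite_eq, Finset.mem_univ, if_true]
  have h1 : wordProd (wy.take (k+1)) = wordProd (wy.take k) * FreeAlgebra.ι ℂ wy[k] := by
    rw [← List.take_concat_get hk', List.concat_eq_append, wordProd_append,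
      wordProd_cons, wordProd_nil, mul_one]
  have h2 : wordProd (wy.drop k) = FreeAlgebra.ι ℂ wy[k] * wordProd (wy.drop (k+1)) := by
    rw [List.drop_eq_getElem_cons hk', wordProd_cons]
  rw [h1, h2]
  simp [Yel, Algebra.TensorProduct.one_def, Algebra.TensorProduct.tmul_mul_tmul]

theorem stmt1 (n m : ℕ)
    (Dl : Fin n → (BiPartiteAlg n m →ₗ[ℂ] BiPartiteAlg n m ⊗[ℂ] BiPartiteAlg n m))
    (Dr : Fin m → (BiPartiteAlg n m →ₗ[ℂ] BiPartiteAlg n m ⊗[ℂ] BiPartiteAlg n m))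
    (hDl : ∀ (i : Fin n) (wx : List (Fin n)) (wy : List (Fin m)),
      Dl i (wordProd wx ⊗ₜ[ℂ] wordProd wy) =
        ∑ k ∈ range wx.length,
          if wx[k]? = some i then
            ((wordProd (wx.take k) ⊗ₜ[ℂ] wordProd wy) ⊗ₜ[ℂ]
              (wordProd (wx.drop (k+1)) ⊗ₜ[ℂ] (1 : FreeAlgebra ℂ (Fin m))) :
                BiPartiteAlg n m ⊗[ℂ] BiPartiteAlg n m)
          else 0)
    (hDr : ∀ (j : Fin m) (wx : List (Fin n)) (wy : List (Fin m)),
      Dr j (wordProd wx ⊗ₜ[ℂ] wordProd wy) =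
        ∑ k ∈ range wy.length,
          if wy[k]? = some j then
            ((wordProd wx ⊗ₜ[ℂ] wordProd (wy.take k)) ⊗ₜ[ℂ]
              ((1 : FreeAlgebra ℂ (Fin n)) ⊗ₜ[ℂ] wordProd (wy.drop (k+1))) :
                BiPartiteAlg n m ⊗[ℂ] BiPartiteAlg n m)
          else 0)
    (P : BiPartiteAlg n m) :
    (∑ i, (Dl i P * (Xel i ⊗ₜ[ℂ] (1 : BiPartiteAlg n m))
        - ((1 : BiPartiteAlg n m) ⊗ₜ[ℂ] Xel i) * Dl i P))
    - (TensorProduct.comm ℂ (BiPartiteAlg n m) (BiPartiteAlg n m))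
        (∑ j, (Dr j P * (Yel j ⊗ₜ[ℂ] (1 : BiPartiteAlg n m))
          - ((1 : BiPartiteAlg n m) ⊗ₜ[ℂ] Yel j) * Dr j P))
    = P ⊗ₜ[ℂ] (1 : BiPartiteAlg n m) - (1 : BiPartiteAlg n m) ⊗ₜ[ℂ] P := by
  letI : AddCommGroup (BiPartiteAlg n m →ₗ[ℂ] BiPartiteAlg n m ⊗[ℂ] BiPartiteAlg n m) :=
    LinearMap.addCommGroup (M := BiPartiteAlg n m) (N₂ := BiPartiteAlg n m ⊗[ℂ] BiPartiteAlg n m)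
  set F : BiPartiteAlg n m →ₗ[ℂ] BiPartiteAlg n m ⊗[ℂ] BiPartiteAlg n m :=
    (∑ i, ((LinearMap.mulRight ℂ (Xel i ⊗ₜ[ℂ] (1 : BiPartiteAlg n m))).comp (Dl i)
        - (LinearMap.mulLeft ℂ ((1 : BiPartiteAlg n m) ⊗ₜ[ℂ] Xel i)).comp (Dl i)))
    - ((TensorProduct.comm ℂ (BiPartiteAlg n m) (BiPartiteAlg n m)).toLinearMap.comp
        (∑ j, ((LinearMap.mulRight ℂ (Yel j ⊗ₜ[ℂ] (1 : BiPartiteAlg n m))).comp (Dr j)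
          - (LinearMap.mulLeft ℂ ((1 : BiPartiteAlg n m) ⊗ₜ[ℂ] Yel j)).comp (Dr j))))
    - ((TensorProduct.mk ℂ (BiPartiteAlg n m) (BiPartiteAlg n m)).flip 1
        - TensorProduct.mk ℂ (BiPartiteAlg n m) (BiPartiteAlg n m) 1) with hFdef
  have hF : ∀ Q : BiPartiteAlg n m, F Q =
      (∑ i, (Dl i Q * (Xel i ⊗ₜ[ℂ] (1 : BiPartiteAlg n m))
        - ((1 : BiPartiteAlg n m) ⊗ₜ[ℂ] Xel i) * Dl i Q))
      - (TensorProduct.comm ℂ (BiPartiteAlg n m) (BiPartiteAlg n m))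
          (∑ j, (Dr j Q * (Yel j ⊗ₜ[ℂ] (1 : BiPartiteAlg n m))
            - ((1 : BiPartiteAlg n m) ⊗ₜ[ℂ] Yel j) * Dr j Q))
      - (Q ⊗ₜ[ℂ] (1 : BiPartiteAlg n m) - (1 : BiPartiteAlg n m) ⊗ₜ[ℂ] Q) := by
    intro Q
    simp [hFdef, LinearMap.sub_apply (M := BiPartiteAlg n m) (N₂ := BiPartiteAlg n m ⊗[ℂ] BiPartiteAlg n m),
      LinearMap.sum_apply (M := BiPartiteAlg n m) (M₂ := BiPartiteAlg n m ⊗[ℂ] BiPartiteAlg n m), LinearMap.comp_apply,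
      Finset.sum_sub_distrib (G := BiPartiteAlg n m ⊗[ℂ] BiPartiteAlg n m),
      LinearMap.mulRight_apply, LinearMap.mulLeft_apply, TensorProduct.mk_apply]
  have hzero : ∀ Q : BiPartiteAlg n m, F Q = 0 := by
    intro Q
    have hQ : Q ∈ Submodule.span ℂ {p : BiPartiteAlg n m |
        ∃ wx wy, p = wordProd wx ⊗ₜ[ℂ] wordProd wy} := by
      rw [span_pairs]; trivial
    refine Submodule.span_induction (p := fun x _ => F x = 0) ?_ (map_zero F) ?_ ?_ hQ
    · rintro _ ⟨wx, wy, rfl⟩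
      rw [hF, left_sum Dl hDl wx wy, right_sum Dr hDr wx wy, map_sub]
      rw [TensorProduct.comm_tmul, TensorProduct.comm_tmul]
      rw [show ((1 : BiPartiteAlg n m) ⊗ₜ[ℂ] (wordProd wx ⊗ₜ[ℂ] wordProd wy : BiPartiteAlg n m))
        = ((1 : BiPartiteAlg n m) ⊗ₜ[ℂ] (wordProd wx ⊗ₜ[ℂ] wordProd wy : BiPartiteAlg n m)) from rfl]
      abel
    · intro x y _ _ hx hy; rw [map_add, hx, hy, add_zero]
    · intro c x _ hx; rw [map_smul, hx, smul_zero]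
  have h := hzero P
  rw [hF P] at h
  exact sub_eq_zero.mp h
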